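/- If φ is an automorphism of the unit disc, then for every n ≥ 1 the n-th iterate φ_n satisfies ‖C_{φ_n}‖_{B→B} ≤ 1 + n·ρ(φ(0),0), where ρ is the hyperbolic distance on the unit disc. -/

import Mathlib

open Complex Metric Set Filter MeasureTheory Finset

noncomputable section

/-- The open unit disc in ℂ. -/
def D1 : Set ℂ := Metric.ball 0 1

/-- Analytic (holomorphic) on the open unit disc. -/
def AnalyticOnD (f : ℂ → ℂ) : Prop := DifferentiableOn ℂ f D1

/-- Bloch seminorm. -/
def blochSemi (f : ℂ → ℂ) : ℝ := ⨆ z : D1, (1 - ‖(z : ℂ)‖ ^ 2) * ‖deriv f (z : ℂ)‖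

/-- Bloch norm. -/
def blochNorm (f : ℂ → ℂ) : ℝ := ‖f 0‖ + blochSemi f

/-- Membership in the Bloch space. -/
def InBloch (f : ℂ → ℂ) : Prop :=
  AnalyticOnD f ∧ ∃ C, ∀ z ∈ D1, (1 - ‖z‖ ^ 2) * ‖deriv f z‖ ≤ C

/-- Sup norm over the unit disc. -/
def supNormD (f : ℂ → ℂ) : ℝ := ⨆ z : D1, ‖f (z : ℂ)‖

/-- Weighted composition operator uC_φ. -/
def wco (u φ : ℂ → ℂ) (f : ℂ → ℂ) : ℂ → ℂ := fun z => u z * f (φ z)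

/-- Multiplication operator M_u. -/
def mult (u : ℂ → ℂ) (f : ℂ → ℂ) : ℂ → ℂ := fun z => u z * f z

/-- The weight u_{(n)} = ∏_{j=0}^{n-1} u ∘ φ_j. -/
def wprod (u φ : ℂ → ℂ) (n : ℕ) : ℂ → ℂ := fun z => ∏ j ∈ Finset.range n, u (φ^[j] z)

/-- Boundedness of an operator on the Bloch space. -/
def BddOnBloch (T : (ℂ → ℂ) → (ℂ → ℂ)) : Prop :=
  ∃ C, ∀ f, InBloch f → InBloch (T f) ∧ blochNorm (T f) ≤ C * blochNorm f

/-- Operator norm on the Bloch space. -/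
def opNormB (T : (ℂ → ℂ) → (ℂ → ℂ)) : ℝ :=
  sInf {C : ℝ | 0 ≤ C ∧ ∀ f, InBloch f → blochNorm (T f) ≤ C * blochNorm f}

/-- Invertibility of an operator on the Bloch space (bounded two-sided inverse). -/
def InvertibleOnBloch (T : (ℂ → ℂ) → (ℂ → ℂ)) : Prop :=
  BddOnBloch T ∧ ∃ S, BddOnBloch S ∧
    ∀ f, InBloch f → Set.EqOn (S (T f)) f D1 ∧ Set.EqOn (T (S f)) f D1

/-- Spectrum of an operator acting on the Bloch space. -/
def blochSpectrum (T : (ℂ → ℂ) → (ℂ → ℂ)) : Set ℂ :=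
  {lam | ¬ InvertibleOnBloch (fun f z => lam * f z - T f z)}

/-- Automorphism of the unit disc (Möbius form). -/
def IsDiscAuto (φ : ℂ → ℂ) : Prop :=
  ∃ lam a : ℂ, ‖lam‖ = 1 ∧ a ∈ D1 ∧ ∀ z, φ z = lam * (a - z) / (1 - (starRingEnd ℂ) a * z)

/-- Hyperbolic distance on the unit disc. -/
def hypDist (z w : ℂ) : ℝ :=
  (1 / 2) * Real.log ((1 + ‖(z - w) / (1 - (starRingEnd ℂ) z * w)‖) /
    (1 - ‖(z - w) / (1 - (starRingEnd ℂ) z * w)‖))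

/-- The disc algebra A(𝔻). -/
def InDiscAlgebra (u : ℂ → ℂ) : Prop :=
  ContinuousOn u (Metric.closedBall 0 1) ∧ AnalyticOnD u

/-- u is bounded away from zero on the unit disc. -/
def BoundedAwayFromZero (u : ℂ → ℂ) : Prop := ∃ δ > 0, ∀ z ∈ D1, δ ≤ ‖u z‖

/-- Parabolic automorphism with unique fixed point a on the unit circle (φ'(a)=1). -/
def IsParabolicAuto (φ : ℂ → ℂ) (a : ℂ) : Prop :=
  IsDiscAuto φ ∧ ‖a‖ = 1 ∧ φ a = a ∧ deriv φ a = 1 ∧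
    ∀ w, ‖w‖ ≤ 1 → φ w = w → w = a

/-- Hyperbolic automorphism with attractive fixed point a and repulsive fixed point b. -/
def IsHyperbolicAuto (φ : ℂ → ℂ) (a b : ℂ) : Prop :=
  IsDiscAuto φ ∧ ‖a‖ = 1 ∧ ‖b‖ = 1 ∧ a ≠ b ∧ φ a = a ∧ φ b = b ∧
    ∃ μ : ℝ, 0 < μ ∧ μ < 1 ∧ deriv φ a = (μ : ℂ)

/-- Square of the Dirichlet norm (normalized area measure on 𝔻). -/
def dirichletNormSq (f : ℂ → ℂ) : ℝ :=
  ‖f 0‖ ^ 2 + (1 / Real.pi) * ∫ z in D1, ‖deriv f z‖ ^ 2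

/-- Dirichlet norm. -/
def dirichletNorm (f : ℂ → ℂ) : ℝ := Real.sqrt (dirichletNormSq f)

/-- Membership in the Dirichlet space. -/
def InDirichlet (f : ℂ → ℂ) : Prop :=
  AnalyticOnD f ∧ MeasureTheory.IntegrableOn (fun z => ‖deriv f z‖ ^ 2) D1

/-- Boundedness of an operator on the Dirichlet space. -/
def BddOnDirichlet (T : (ℂ → ℂ) → (ℂ → ℂ)) : Prop :=
  ∃ C, ∀ f, InDirichlet f → InDirichlet (T f) ∧ dirichletNorm (T f) ≤ C * dirichletNorm f

/-- Operator norm on the Dirichlet space. -/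
def opNormDir (T : (ℂ → ℂ) → (ℂ → ℂ)) : ℝ :=
  sInf {C : ℝ | 0 ≤ C ∧ ∀ f, InDirichlet f → dirichletNorm (T f) ≤ C * dirichletNorm f}

/-- Invertibility of an operator on the Dirichlet space. -/
def InvertibleOnDirichlet (T : (ℂ → ℂ) → (ℂ → ℂ)) : Prop :=
  BddOnDirichlet T ∧ ∃ S, BddOnDirichlet S ∧
    ∀ f, InDirichlet f → Set.EqOn (S (T f)) f D1 ∧ Set.EqOn (T (S f)) f D1

/-- Spectrum of an operator on the Dirichlet space. -/
def dirichletSpectrum (T : (ℂ → ℂ) → (ℂ → ℂ)) : Set ℂ :=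
  {lam | ¬ InvertibleOnDirichlet (fun f z => lam * f z - T f z)}

/-- Operator norm of M_{u'} : B → H^∞_{v₁}. -/
def opNormBtoHv1 (u : ℂ → ℂ) : ℝ :=
  sInf {C : ℝ | 0 ≤ C ∧ ∀ f, InBloch f → ∀ z ∈ D1,
    (1 - ‖z‖ ^ 2) * ‖deriv u z * f z‖ ≤ C * blochNorm f}

/-- Operator norm of M_{u'} : 𝒟 → A². -/
def opNormDtoA2 (u : ℂ → ℂ) : ℝ :=
  sInf {C : ℝ | 0 ≤ C ∧ ∀ f, InDirichlet f →
    Real.sqrt ((1 / Real.pi) * ∫ z in D1, ‖deriv u z * f z‖ ^ 2) ≤ C * dirichletNorm f}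

/-- The logarithmic weight log(e/(1-|z|²)). -/
def logWeight (z : ℂ) : ℝ := Real.log (Real.exp 1 / (1 - ‖z‖ ^ 2))

/-- Characterization of multipliers of the Bloch space: u ∈ H^∞ and the log condition. -/
def MultBChar (u : ℂ → ℂ) : Prop :=
  (∃ M, ∀ z ∈ D1, ‖u z‖ ≤ M) ∧
  (∃ M, ∀ z ∈ D1, (1 - ‖z‖ ^ 2) * ‖deriv u z‖ * logWeight z ≤ M)


/-! ### Auxiliary lemmas for Statement 9 -/

lemma my_normsq (z : ℂ) : ‖z‖ ^ 2 = Complex.normSq z := by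
  rw [Complex.sq_norm]

lemma my_KI (a z : ℂ) :
    Complex.normSq (1 - (starRingEnd ℂ) a * z) - Complex.normSq (a - z)
      = (1 - Complex.normSq a) * (1 - Complex.normSq z) := by
  simp [Complex.normSq_apply, Complex.sub_re, Complex.sub_im, Complex.mul_re, Complex.mul_im,
    Complex.conj_re, Complex.conj_im]
  ring

lemma my_KI' (a z : ℂ) :
    ‖1 - (starRingEnd ℂ) a * z‖ ^ 2 - ‖a - z‖ ^ 2 = (1 - ‖a‖ ^ 2) * (1 - ‖z‖ ^ 2) := by
  simp only [my_normsq]; exact my_KI a z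

lemma mem_D1 {z : ℂ} : z ∈ D1 ↔ ‖z‖ < 1 := by
  simp [D1, mem_ball_zero_iff]

lemma isOpen_D1 : IsOpen D1 := Metric.isOpen_ball

/-- Lipschitz estimate for Bloch functions from the origin. -/
lemma my_lip (f : ℂ → ℂ) (hf : DifferentiableOn ℂ f D1) (M : ℝ)
    (hM : ∀ w ∈ D1, (1 - ‖w‖ ^ 2) * ‖deriv f w‖ ≤ M) (w : ℂ) (hw : w ∈ D1) :
    ‖f w - f 0‖ ≤ M * ((1 / 2) * Real.log ((1 + ‖w‖) / (1 - ‖w‖))) := by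
  have hwD : ‖w‖ < 1 := mem_D1.mp hw
  set r := ‖w‖ with hr
  have hr0 : 0 ≤ r := norm_nonneg w
  have h0D : (0 : ℂ) ∈ D1 := mem_D1.mpr (by norm_num)
  have hM0 : 0 ≤ M := by
    refine le_trans ?_ (hM 0 h0D)
    simpa using norm_nonneg (deriv f 0)
  have hmem : ∀ t ∈ Set.uIcc (0:ℝ) 1, ((t:ℂ) * w) ∈ D1 := by
    intro t ht
    rw [Set.uIcc_of_le zero_le_one] at ht
    rw [mem_D1, norm_mul, Complex.norm_real, Real.norm_eq_abs, _root_.abs_of_nonneg ht.1]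
    nlinarith [ht.1, ht.2, hr0, hwD]
  have hg : ∀ t ∈ Set.uIcc (0:ℝ) 1,
      HasDerivAt (fun s : ℝ => f ((s:ℂ) * w)) (deriv f ((t:ℂ) * w) * w) t := by
    intro t ht
    have h1 : HasDerivAt f (deriv f ((t:ℂ) * w)) ((t:ℂ) * w) :=
      (hf.differentiableAt (isOpen_D1.mem_nhds (hmem t ht))).hasDerivAt
    have h2 : HasDerivAt (fun z : ℂ => z * w) w (t:ℂ) := by
      simpa using (hasDerivAt_id ((t:ℂ))).mul_const w
    have h3 := h1.comp (t:ℂ) h2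
    exact h3.comp_ofReal
  have hderivcont : ContinuousOn (deriv f) D1 :=
    ((hf.analyticOnNhd isOpen_D1).deriv).continuousOn
  have hcont1 : ContinuousOn (fun t : ℝ => deriv f ((t:ℂ) * w) * w) (Set.uIcc (0:ℝ) 1) := by
    refine ContinuousOn.mul ?_ continuousOn_const
    exact hderivcont.comp ((Complex.continuous_ofReal.mul continuous_const).continuousOn)
      (fun t ht => hmem t ht)
  have hint : IntervalIntegrable (fun t : ℝ => deriv f ((t:ℂ) * w) * w)
      MeasureTheory.volume 0 1 := hcont1.intervalIntegrable
  have hFTC := intervalIntegral.integral_eq_sub_of_hasDerivAt hg hint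
  simp only [Complex.ofReal_one, Complex.ofReal_zero, one_mul, zero_mul] at hFTC
  have hb : ∀ t ∈ Set.Icc (0:ℝ) 1,
      ‖deriv f ((t:ℂ) * w) * w‖ ≤ M * (r / (1 - (t * r) ^ 2)) := by
    intro t ht
    have htr0 : 0 ≤ t * r := mul_nonneg ht.1 hr0
    have htr1 : t * r < 1 := lt_of_le_of_lt (by nlinarith [ht.1, ht.2, hr0]) hwD
    have hpos : (0:ℝ) < 1 - (t * r) ^ 2 := by nlinarith
    have hnorm : ‖(t:ℂ) * w‖ = t * r := by
      rw [norm_mul, Complex.norm_real, Real.norm_eq_abs, _root_.abs_of_nonneg ht.1]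
    have h1 := hM ((t:ℂ) * w) (hmem t (by rw [Set.uIcc_of_le zero_le_one]; exact ht))
    rw [hnorm] at h1
    have h2 : ‖deriv f ((t:ℂ) * w)‖ ≤ M / (1 - (t * r) ^ 2) := by
      rw [le_div_iff₀ hpos]; nlinarith [h1]
    rw [norm_mul]
    calc ‖deriv f ((t:ℂ) * w)‖ * ‖w‖ ≤ (M / (1 - (t * r) ^ 2)) * r :=
          mul_le_mul h2 le_rfl hr0 (div_nonneg hM0 hpos.le)
      _ = M * (r / (1 - (t * r) ^ 2)) := by ring
  have hA : ∀ t ∈ Set.uIcc (0:ℝ) 1,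
      HasDerivAt (fun t : ℝ => M / 2 * (Real.log (1 + t * r) - Real.log (1 - t * r)))
        (M * (r / (1 - (t * r) ^ 2))) t := by
    intro t ht
    rw [Set.uIcc_of_le zero_le_one] at ht
    have htr0 : 0 ≤ t * r := mul_nonneg ht.1 hr0
    have htr1 : t * r < 1 := lt_of_le_of_lt (by nlinarith [ht.1, ht.2, hr0]) hwD
    have h1p : (0:ℝ) < 1 + t * r := by linarith
    have h2p : (0:ℝ) < 1 - t * r := by linarith
    have hu1 : HasDerivAt (fun t : ℝ => 1 + t * r) r t := by
      simpa using ((hasDerivAt_id t).mul_const r).const_add 1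
    have hu2 : HasDerivAt (fun t : ℝ => 1 - t * r) (-r) t := by
      simpa using ((hasDerivAt_id t).mul_const r).const_sub 1
    have hl1 := (Real.hasDerivAt_log (ne_of_gt h1p)).comp t hu1
    have hl2 := (Real.hasDerivAt_log (ne_of_gt h2p)).comp t hu2
    have h := (hl1.sub hl2).const_mul (M / 2)
    have hne2 : (1 - (t * r) ^ 2) ≠ 0 := by nlinarith
    refine h.congr_deriv ?_
    rw [show (1:ℝ) - (t * r) ^ 2 = (1 + t * r) * (1 - t * r) by ring]
    field_simp
    ring
  have hbint : IntervalIntegrable (fun t : ℝ => M * (r / (1 - (t * r) ^ 2)))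
      MeasureTheory.volume 0 1 := by
    apply ContinuousOn.intervalIntegrable
    refine ContinuousOn.mul continuousOn_const ?_
    refine ContinuousOn.div continuousOn_const (Continuous.continuousOn (by continuity)) ?_
    intro t ht
    rw [Set.uIcc_of_le zero_le_one] at ht
    have htr0 : 0 ≤ t * r := mul_nonneg ht.1 hr0
    have htr1 : t * r < 1 := lt_of_le_of_lt (by nlinarith [ht.1, ht.2, hr0]) hwD
    nlinarith
  have hval : ∫ t in (0:ℝ)..1, M * (r / (1 - (t * r) ^ 2))
      = M / 2 * (Real.log (1 + r) - Real.log (1 - r)) := by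
    rw [intervalIntegral.integral_eq_sub_of_hasDerivAt hA hbint]
    norm_num
  calc ‖f w - f 0‖ = ‖∫ t in (0:ℝ)..1, deriv f ((t:ℂ) * w) * w‖ := by rw [hFTC]
    _ ≤ ∫ t in (0:ℝ)..1, ‖deriv f ((t:ℂ) * w) * w‖ :=
        intervalIntegral.norm_integral_le_integral_norm zero_le_one
    _ ≤ ∫ t in (0:ℝ)..1, M * (r / (1 - (t * r) ^ 2)) :=
        intervalIntegral.integral_mono_on zero_le_one hint.norm hbint hb
    _ = M / 2 * (Real.log (1 + r) - Real.log (1 - r)) := hval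
    _ = M * ((1 / 2) * Real.log ((1 + r) / (1 - r))) := by
        rw [Real.log_div (by linarith) (by linarith)]
        ring

/-- Seminorm bound for compositions with iterates. -/
lemma my_iter_bound (φ : ℂ → ℂ) (hmap : ∀ z ∈ D1, φ z ∈ D1)
    (hdφ : ∀ z ∈ D1, DifferentiableAt ℂ φ z)
    (hSP : ∀ z ∈ D1, (1 - ‖z‖ ^ 2) * ‖deriv φ z‖ ≤ 1 - ‖φ z‖ ^ 2)
    (f : ℂ → ℂ) (hf : DifferentiableOn ℂ f D1) (M : ℝ)
    (hM : ∀ w ∈ D1, (1 - ‖w‖ ^ 2) * ‖deriv f w‖ ≤ M) :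
    ∀ n : ℕ, DifferentiableOn ℂ (f ∘ φ^[n]) D1 ∧
      ∀ z ∈ D1, (1 - ‖z‖ ^ 2) * ‖deriv (f ∘ φ^[n]) z‖ ≤ M := by
  intro n
  induction n with
  | zero => exact ⟨hf, hM⟩
  | succ n ih =>
    obtain ⟨ihd, ihM⟩ := ih
    have hcomp : f ∘ φ^[n+1] = (f ∘ φ^[n]) ∘ φ := by
      rw [Function.iterate_succ]
      rfl
    rw [hcomp]
    constructor
    · intro z hz
      exact (((ihd.differentiableAt (isOpen_D1.mem_nhds (hmap z hz))).comp z
        (hdφ z hz))).differentiableWithinAt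
    · intro z hz
      have h1 : DifferentiableAt ℂ (f ∘ φ^[n]) (φ z) :=
        ihd.differentiableAt (isOpen_D1.mem_nhds (hmap z hz))
      rw [deriv_comp (x := z) h1 (hdφ z hz), norm_mul]
      have hA := mul_le_mul_of_nonneg_left (hSP z hz)
        (norm_nonneg (deriv (f ∘ φ^[n]) (φ z)))
      calc (1 - ‖z‖ ^ 2) * (‖deriv (f ∘ φ^[n]) (φ z)‖ * ‖deriv φ z‖)
          = ‖deriv (f ∘ φ^[n]) (φ z)‖ * ((1 - ‖z‖ ^ 2) * ‖deriv φ z‖) := by ring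
        _ ≤ ‖deriv (f ∘ φ^[n]) (φ z)‖ * (1 - ‖φ z‖ ^ 2) := hA
        _ = (1 - ‖φ z‖ ^ 2) * ‖deriv (f ∘ φ^[n]) (φ z)‖ := by ring
        _ ≤ M := ihM (φ z) (hmap z hz)

/-- iterate norm estimate via the hyperbolic distance. -/
theorem stmt_9 (φ : ℂ → ℂ) (hφ : IsDiscAuto φ) :
    ∀ n : ℕ, 1 ≤ n → opNormB (fun f => f ∘ φ^[n]) ≤ 1 + n * hypDist (φ 0) 0 := by
  obtain ⟨lam, a, hlam, haD, hform⟩ := hφ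
  have ha : ‖a‖ < 1 := mem_D1.mp haD
  have hφeq : φ = fun z => lam * (a - z) / (1 - (starRingEnd ℂ) a * z) := funext hform
  subst hφeq
  set φ : ℂ → ℂ := fun z => lam * (a - z) / (1 - (starRingEnd ℂ) a * z) with hφdef
  -- denominator is nonzero on the disc
  have hden : ∀ z : ℂ, ‖z‖ < 1 → (1 : ℂ) - (starRingEnd ℂ) a * z ≠ 0 := by
    intro z hz h
    have h1 : (starRingEnd ℂ) a * z = 1 := by
      have := sub_eq_zero.mp h; exact this.symm
    have h2 : ‖(starRingEnd ℂ) a * z‖ < 1 := by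
      rw [norm_mul, RCLike.norm_conj]
      nlinarith [norm_nonneg z, norm_nonneg a]
    rw [h1] at h2; simp at h2
  -- derivative of φ
  have hD : ∀ z : ℂ, ‖z‖ < 1 → HasDerivAt φ
      (lam * ((Complex.normSq a : ℂ) - 1) / (1 - (starRingEnd ℂ) a * z) ^ 2) z := by
    intro z hz
    have hN := hden z hz
    have h1 : HasDerivAt (fun w : ℂ => lam * (a - w)) (-lam) z := by
      simpa using ((hasDerivAt_id z).const_sub a).const_mul lam
    have h2 : HasDerivAt (fun w : ℂ => 1 - (starRingEnd ℂ) a * w) (-(starRingEnd ℂ) a) z := by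
      simpa using ((hasDerivAt_id z).const_mul ((starRingEnd ℂ) a)).const_sub 1
    have h3 := h1.div h2 hN
    refine h3.congr_deriv ?_
    have hc : ((Complex.normSq a : ℂ)) = (starRingEnd ℂ) a * a := by
      rw [mul_comm, Complex.mul_conj]
    rw [hc]
    ring
  -- φ maps the disc to itself
  have hmap : ∀ z ∈ D1, φ z ∈ D1 := by
    intro z hz
    rw [mem_D1] at hz ⊢
    have hN := hden z hz
    have hNpos : (0:ℝ) < ‖1 - (starRingEnd ℂ) a * z‖ := norm_pos_iff.mpr hN
    have hKI := my_KI' a z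
    have hA1 : (0:ℝ) < 1 - ‖a‖ ^ 2 := by nlinarith [norm_nonneg a]
    have hZ1 : (0:ℝ) < 1 - ‖z‖ ^ 2 := by nlinarith [norm_nonneg z]
    have h2 : ‖a - z‖ ^ 2 < ‖1 - (starRingEnd ℂ) a * z‖ ^ 2 := by
      nlinarith [mul_pos hA1 hZ1]
    have h3 : ‖a - z‖ < ‖1 - (starRingEnd ℂ) a * z‖ :=
      lt_of_pow_lt_pow_left₀ 2 (norm_nonneg _) h2
    show ‖lam * (a - z) / (1 - (starRingEnd ℂ) a * z)‖ < 1
    rw [norm_div, norm_mul, hlam, one_mul, div_lt_one hNpos]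
    exact h3
  have hdiff : ∀ z ∈ D1, DifferentiableAt ℂ φ z := fun z hz =>
    (hD z (mem_D1.mp hz)).differentiableAt
  -- Schwarz–Pick for φ
  have hSP : ∀ z ∈ D1, (1 - ‖z‖ ^ 2) * ‖deriv φ z‖ ≤ 1 - ‖φ z‖ ^ 2 := by
    intro z hzD
    have hz := mem_D1.mp hzD
    have hN := hden z hz
    have hNpos : (0:ℝ) < ‖1 - (starRingEnd ℂ) a * z‖ := norm_pos_iff.mpr hN
    rw [(hD z hz).deriv]
    have hcast : ((Complex.normSq a : ℂ) - 1) = ((Complex.normSq a - 1 : ℝ) : ℂ) := by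
      push_cast; ring
    have hnum : ‖lam * ((Complex.normSq a : ℂ) - 1) / (1 - (starRingEnd ℂ) a * z) ^ 2‖
        = (1 - ‖a‖ ^ 2) / ‖1 - (starRingEnd ℂ) a * z‖ ^ 2 := by
      rw [norm_div, norm_mul, hlam, one_mul, norm_pow, hcast, Complex.norm_real,
        Real.norm_eq_abs, abs_of_nonpos (by nlinarith [my_normsq a, norm_nonneg a]),
        my_normsq a]
      ring
    have hphiz : ‖φ z‖ ^ 2 = ‖a - z‖ ^ 2 / ‖1 - (starRingEnd ℂ) a * z‖ ^ 2 := by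
      show ‖lam * (a - z) / (1 - (starRingEnd ℂ) a * z)‖ ^ 2 = _
      rw [norm_div, norm_mul, hlam, one_mul, div_pow]
    rw [hnum, hphiz]
    have hKI := my_KI' a z
    have hne : ‖1 - (starRingEnd ℂ) a * z‖ ^ 2 ≠ 0 := by positivity
    have h4 : (1:ℝ) - ‖a - z‖ ^ 2 / ‖1 - (starRingEnd ℂ) a * z‖ ^ 2
        = (1 - ‖a‖ ^ 2) * (1 - ‖z‖ ^ 2) / ‖1 - (starRingEnd ℂ) a * z‖ ^ 2 := by
      rw [← hKI, sub_div, div_self hne]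
    rw [h4]
    apply le_of_eq
    ring
  have h0D : (0 : ℂ) ∈ D1 := mem_D1.mpr (by norm_num)
  have hφ0D : φ 0 ∈ D1 := hmap 0 h0D
  have hφ0 : ‖φ 0‖ < 1 := mem_D1.mp hφ0D
  -- hyperbolic distance to the origin
  have hρeq : hypDist (φ 0) 0 = (1 / 2) * Real.log ((1 + ‖φ 0‖) / (1 - ‖φ 0‖)) := by
    simp [hypDist]
  have hρ0 : 0 ≤ hypDist (φ 0) 0 := by
    rw [hρeq]
    have : (1:ℝ) ≤ (1 + ‖φ 0‖) / (1 - ‖φ 0‖) := by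
      rw [le_div_iff₀ (by linarith)]
      nlinarith [norm_nonneg (φ 0)]
    nlinarith [Real.log_nonneg this]
  intro n hn
  apply csInf_le
  · exact ⟨0, fun x hx => hx.1⟩
  constructor
  · positivity
  · intro f hfB
    obtain ⟨hfd, C, hC⟩ := hfB
    set M := blochSemi f with hMdef
    have hBdd : BddAbove (Set.range fun z : D1 => (1 - ‖(z:ℂ)‖ ^ 2) * ‖deriv f (z:ℂ)‖) := by
      refine ⟨C, ?_⟩
      rintro x ⟨z, rfl⟩
      exact hC z z.2
    have hMpt : ∀ w ∈ D1, (1 - ‖w‖ ^ 2) * ‖deriv f w‖ ≤ M := by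
      intro w hw
      exact le_ciSup hBdd (⟨w, hw⟩ : D1)
    have hM0 : 0 ≤ M := by
      refine le_trans ?_ (hMpt 0 h0D)
      simpa using norm_nonneg (deriv f 0)
    have hiter := my_iter_bound φ hmap hdiff hSP f hfd M hMpt
    -- telescoping estimate at the origin
    have hpt : ∀ m : ℕ, ‖f (φ^[m] 0) - f 0‖ ≤ m * (M * hypDist (φ 0) 0) := by
      intro m
      induction m with
      | zero => simp
      | succ m ih =>
        obtain ⟨hgd, hgM⟩ := hiter m
        have hlip := my_lip (f ∘ φ^[m]) hgd M hgM (φ 0) hφ0D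
        rw [← hρeq] at hlip
        have hit : φ^[m+1] 0 = φ^[m] (φ 0) := Function.iterate_succ_apply φ m 0
        have key : ‖f (φ^[m+1] 0) - f (φ^[m] 0)‖ ≤ M * hypDist (φ 0) 0 := by
          rw [hit]
          simpa using hlip
        calc ‖f (φ^[m+1] 0) - f 0‖
            ≤ ‖f (φ^[m+1] 0) - f (φ^[m] 0)‖ + ‖f (φ^[m] 0) - f 0‖ := by
              have := norm_sub_le_norm_sub_add_norm_sub (f (φ^[m+1] 0)) (f (φ^[m] 0)) (f 0)
              exact this
          _ ≤ M * hypDist (φ 0) 0 + m * (M * hypDist (φ 0) 0) := add_le_add key ih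
          _ = (m + 1 : ℕ) * (M * hypDist (φ 0) 0) := by push_cast; ring
    obtain ⟨hnd, hnM⟩ := hiter n
    haveI : Nonempty D1 := ⟨⟨0, h0D⟩⟩
    have hsemi : blochSemi (f ∘ φ^[n]) ≤ M :=
      ciSup_le (fun z => hnM (z : ℂ) z.2)
    have hval : ‖(f ∘ φ^[n]) 0‖ ≤ ‖f 0‖ + n * (M * hypDist (φ 0) 0) := by
      have h1 := hpt n
      calc ‖(f ∘ φ^[n]) 0‖ = ‖(f (φ^[n] 0) - f 0) + f 0‖ := by
            simp [Function.comp]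
        _ ≤ ‖f (φ^[n] 0) - f 0‖ + ‖f 0‖ := norm_add_le _ _
        _ ≤ n * (M * hypDist (φ 0) 0) + ‖f 0‖ := add_le_add h1 le_rfl
        _ = ‖f 0‖ + n * (M * hypDist (φ 0) 0) := by ring
    have hBn : blochNorm (f ∘ φ^[n]) ≤ ‖f 0‖ + n * (M * hypDist (φ 0) 0) + M := by
      unfold blochNorm
      calc ‖(f ∘ φ^[n]) 0‖ + blochSemi (f ∘ φ^[n])
          ≤ (‖f 0‖ + n * (M * hypDist (φ 0) 0)) + M := add_le_add hval hsemi
        _ = ‖f 0‖ + n * (M * hypDist (φ 0) 0) + M := by ring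
    have hBf : blochNorm f = ‖f 0‖ + M := rfl
    rw [hBf]
    have hn0 : (0:ℝ) ≤ (n:ℝ) := Nat.cast_nonneg n
    nlinarith [norm_nonneg (f 0), hρ0, hM0, hBn,
      mul_nonneg (mul_nonneg hn0 hρ0) (norm_nonneg (f 0))]
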